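/- Under independent Uniform[0,1] inputs, the nonnormalized Sobol' index of any nonempty A ⊆ C for the multilinear model equals Var[(F_ML)_A] = (1/12^{|A|}) (I^B(A))², where I^B is the Banzhaf interaction index of the capacity. -/
import Mathlib

open Finset MeasureTheory

/-- The multilinear model of a capacity. -/
def FML {m : ℕ} (μ : Finset (Fin m) → ℝ) (v : Fin m → ℝ) : ℝ :=
  ∑ A : Finset (Fin m), μ A * (∏ j ∈ A, v j) * (∏ j ∈ Aᶜ, (1 - v j))

/-- A capacity: normalized monotone set function. -/
def IsCapacity {m : ℕ} (μ : Finset (Fin m) → ℝ) : Prop :=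
  μ ∅ = 0 ∧ μ univ = 1 ∧ ∀ A B : Finset (Fin m), A ⊆ B → μ A ≤ μ B

/-- The Banzhaf interaction index of a set function. -/
noncomputable def IB {m : ℕ} (μ : Finset (Fin m) → ℝ) (A : Finset (Fin m)) : ℝ :=
  (1 / 2 ^ (m - A.card)) *
    ∑ D ∈ Aᶜ.powerset, ∑ D' ∈ A.powerset, (-1 : ℝ) ^ (A.card - D'.card) * μ (D' ∪ D)

/-- The joint law of `m` independent Uniform[0,1] random variables. -/
noncomputable def unifPi (m : ℕ) : Measure (Fin m → ℝ) :=
  Measure.pi fun _ => volume.restrict (Set.Icc (0 : ℝ) 1)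

/-- Conditional expectation of `f` given the coordinates in `D` (for independent
Uniform[0,1] inputs): integrate out the remaining coordinates. -/
noncomputable def condE {m : ℕ} (D : Finset (Fin m)) (f : (Fin m → ℝ) → ℝ)
    (v : Fin m → ℝ) : ℝ :=
  ∫ w, f (fun j => if j ∈ D then v j else w j) ∂(unifPi m)

/-- The HDMR component of `f` associated with the subset `A`. -/
noncomputable def hdmr {m : ℕ} (A : Finset (Fin m)) (f : (Fin m → ℝ) → ℝ)
    (v : Fin m → ℝ) : ℝ :=
  ∑ D ∈ A.powerset, (-1 : ℝ) ^ (A \ D).card * condE D f v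

/-- Variance with respect to the uniform product law. -/
noncomputable def varUnif {m : ℕ} (g : (Fin m → ℝ) → ℝ) : ℝ :=
  ∫ v, (g v - ∫ w, g w ∂(unifPi m)) ^ 2 ∂(unifPi m)

/-! ### Auxiliary material -/

noncomputable abbrev unif : Measure ℝ := volume.restrict (Set.Icc (0:ℝ) 1)

instance : IsProbabilityMeasure unif := ⟨by simp⟩

lemma aux_integrable_prod : ∀ {n : ℕ} (f : Fin n → ℝ → ℝ),
    (∀ i, Integrable (f i) unif) →
    Integrable (fun x : Fin n → ℝ => ∏ i, f i (x i)) (Measure.pi fun _ => unif)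
  | 0, f, _ => by
      rw [Measure.pi_of_empty]
      simp only [Finset.univ_eq_empty, Finset.prod_empty]
      exact integrable_const _
  | (n+1), f, hf => by
      have h := ((measurePreserving_piFinSuccAbove (fun _ : Fin (n+1) => unif) 0).symm)
      rw [← h.integrable_comp_emb (MeasurableEquiv.measurableEmbedding _)]
      simp_rw [MeasurableEquiv.piFinSuccAbove_symm_apply, Fin.insertNthEquiv,
        Fin.prod_univ_succ, Fin.insertNth_zero]
      simp only [Fin.zero_succAbove, Function.comp_def, Fin.cons_zero, Fin.cons_succ]
      exact Integrable.mul_prod (hf 0)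
        (aux_integrable_prod (fun i => f i.succ) (fun i => hf _))

lemma aux_integral_prod : ∀ {n : ℕ} (f : Fin n → ℝ → ℝ),
    ∫ x, ∏ i, f i (x i) ∂(Measure.pi fun _ : Fin n => unif) = ∏ i, ∫ x, f i x ∂unif
  | 0, f => by
      rw [Measure.pi_of_empty]
      simp
  | (n+1), f => by
      calc ∫ x, ∏ i, f i (x i) ∂(Measure.pi fun _ : Fin (n+1) => unif)
          = ∫ x : ℝ × (Fin n → ℝ), f 0 x.1 * ∏ i : Fin n, f i.succ (x.2 i)
              ∂(unif.prod (Measure.pi fun _ => unif)) := by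
            rw [← ((measurePreserving_piFinSuccAbove
              (fun _ : Fin (n+1) => unif) 0).symm).integral_comp']
            simp_rw [MeasurableEquiv.piFinSuccAbove_symm_apply, Fin.insertNthEquiv,
              Fin.prod_univ_succ, Fin.insertNth_zero, Equiv.coe_fn_mk]
            simp only [Fin.cons_zero, Fin.cons_succ, cast_eq]
        _ = (∫ x, f 0 x ∂unif) * ∏ i : Fin n, ∫ x, f i.succ x ∂unif := by
            rw [← aux_integral_prod (fun i => f i.succ), ← integral_prod_mul]
        _ = ∏ i, ∫ x, f i x ∂unif := (Fin.prod_univ_succ fun i => ∫ x, f i x ∂unif).symm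

lemma unif_int_eq (f : ℝ → ℝ) : ∫ x, f x ∂unif = ∫ x in (0:ℝ)..1, f x := by
  rw [intervalIntegral.integral_of_le zero_le_one]
  exact MeasureTheory.integral_Icc_eq_integral_Ioc

lemma unif_int_const (c : ℝ) : ∫ _x, c ∂unif = c := by simp

lemma unif_int_id : ∫ x, x ∂unif = 1/2 := by
  rw [unif_int_eq]; norm_num [integral_id]

lemma unif_int_one_sub : ∫ x, (1 - x) ∂unif = 1/2 := by
  rw [unif_int_eq fun x => 1 - x]
  rw [intervalIntegral.integral_sub intervalIntegrable_const
    (intervalIntegral.intervalIntegrable_id)]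
  norm_num [integral_id]

lemma unif_int_sub_half : ∫ x, (x - 1/2) ∂unif = 0 := by
  rw [unif_int_eq fun x => x - 1/2]
  rw [intervalIntegral.integral_sub intervalIntegral.intervalIntegrable_id
    intervalIntegrable_const]
  simp [integral_id]

lemma unif_int_sq : ∫ x, (x - 1/2)^2 ∂unif = 1/12 := by
  rw [unif_int_eq fun x => (x - 1/2)^2]
  rw [intervalIntegral.integral_comp_sub_right (fun x => x^2) (1/2)]
  rw [integral_pow]
  norm_num

lemma unif_integrable {f : ℝ → ℝ} (hf : Continuous f) : Integrable f unif :=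
  hf.integrableOn_Icc

lemma condE_FML {m : ℕ} (μ : Finset (Fin m) → ℝ) (D : Finset (Fin m)) (v : Fin m → ℝ) :
    condE D (FML μ) v = ∑ B : Finset (Fin m),
      μ B * ((∏ j ∈ D, (if j ∈ B then v j else 1 - v j)) * (1/2:ℝ) ^ (m - D.card)) := by
  set g : Finset (Fin m) → Fin m → ℝ → ℝ := fun B j x =>
    if j ∈ B then (if j ∈ D then v j else x) else (1 - if j ∈ D then v j else x) with hg
  have hgc : ∀ B j, Continuous (g B j) := by
    intro B j; simp only [hg]; split_ifs <;> fun_prop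
  have key : ∀ (B : Finset (Fin m)) (w : Fin m → ℝ),
      μ B * (∏ j ∈ B, (if j ∈ D then v j else w j)) *
        (∏ j ∈ Bᶜ, (1 - if j ∈ D then v j else w j))
      = μ B * ∏ j, g B j (w j) := by
    intro B w
    rw [mul_assoc, ← Finset.prod_mul_prod_compl B (fun j => g B j (w j))]
    congr 1
    congr 1
    · exact Finset.prod_congr rfl fun j hj => by simp [hg, hj]
    · exact Finset.prod_congr rfl fun j hj => by
        simp [hg, (Finset.mem_compl.mp hj)]
  have hunifPi : unifPi m = Measure.pi fun _ => unif := rfl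
  unfold condE FML
  rw [hunifPi]
  have : ∀ w : Fin m → ℝ, (∑ B : Finset (Fin m),
      μ B * (∏ j ∈ B, (if j ∈ D then v j else w j)) *
        (∏ j ∈ Bᶜ, (1 - if j ∈ D then v j else w j)))
      = ∑ B : Finset (Fin m), μ B * ∏ j, g B j (w j) :=
    fun w => Finset.sum_congr rfl fun B _ => key B w
  simp only [this]
  rw [integral_finset_sum _ (fun B _ =>
    (aux_integrable_prod (g B) (fun j => unif_integrable (hgc B j))).const_mul (μ B))]
  refine Finset.sum_congr rfl fun B _ => ?_
  rw [MeasureTheory.integral_const_mul, aux_integral_prod (g B)]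
  congr 1
  have hv : ∀ j, ∫ x, g B j x ∂unif
      = (if j ∈ D then (if j ∈ B then v j else 1 - v j) else (1/2:ℝ)) := by
    intro j
    simp only [hg]
    by_cases hB : j ∈ B <;> by_cases hD : j ∈ D <;>
      simp [hB, hD, unif_int_const, unif_int_id, unif_int_one_sub]
  simp only [hv]
  rw [← Finset.prod_mul_prod_compl D
    (fun j => if j ∈ D then (if j ∈ B then v j else 1 - v j) else (1/2:ℝ))]
  congr 1
  · exact Finset.prod_congr rfl fun j hj => by simp [hj]
  · rw [Finset.prod_congr rfl (fun j hj => if_neg (Finset.mem_compl.mp hj)),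
      Finset.prod_const, Finset.card_compl, Fintype.card_fin]

lemma hdmr_FML {m : ℕ} (μ : Finset (Fin m) → ℝ) (A : Finset (Fin m)) (v : Fin m → ℝ) :
    hdmr A (FML μ) v =
      ((1/2:ℝ) ^ (m - A.card) * ∑ B : Finset (Fin m), (-1:ℝ) ^ ((A \ B).card) * μ B)
        * ∏ j ∈ A, (v j - 1/2) := by
  unfold hdmr
  simp only [condE_FML, Finset.mul_sum]
  rw [Finset.sum_comm]
  have inner : ∀ B : Finset (Fin m),
      (∑ D ∈ A.powerset, (-1:ℝ) ^ (A \ D).card *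
        (μ B * ((∏ j ∈ D, (if j ∈ B then v j else 1 - v j)) * (1/2:ℝ) ^ (m - D.card))))
      = μ B * ((1/2:ℝ) ^ (m - A.card) *
          ∏ j ∈ A, ((if j ∈ B then v j else 1 - v j) + (-(1/2:ℝ)))) := by
    intro B
    rw [Finset.prod_add, Finset.mul_sum, Finset.mul_sum]
    refine Finset.sum_congr rfl fun D hD => ?_
    have hDA : D ⊆ A := Finset.mem_powerset.mp hD
    have h1 : (A \ D).card = A.card - D.card := Finset.card_sdiff_of_subset hDA
    have h2 : D.card ≤ A.card := Finset.card_le_card hDA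
    have h3 : A.card ≤ m := by
      simpa using Finset.card_le_univ A
    have h4 : m - D.card = (m - A.card) + (A \ D).card := by omega
    rw [h4, pow_add, Finset.prod_const,
      show (-(1/2):ℝ) = (-1)*(1/2) by norm_num, mul_pow]
    ring
  simp only [inner]
  have sgn : ∀ B : Finset (Fin m),
      (∏ j ∈ A, ((if j ∈ B then v j else 1 - v j) + (-(1/2:ℝ))))
      = (-1:ℝ) ^ ((A \ B).card) * ∏ j ∈ A, (v j - 1/2) := by
    intro B
    have : ∀ j ∈ A, ((if j ∈ B then v j else 1 - v j) + (-(1/2:ℝ)))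
        = (if j ∈ B then (1:ℝ) else -1) * (v j - 1/2) := by
      intro j _; split_ifs <;> ring
    rw [Finset.prod_congr rfl this, Finset.prod_mul_distrib]
    congr 1
    rw [Finset.prod_ite, Finset.prod_const, Finset.prod_const, one_pow, one_mul,
      ← Finset.sdiff_eq_filter]
  simp only [sgn]
  rw [Finset.sum_mul]
  refine Finset.sum_congr rfl fun B _ => ?_
  ring

lemma IB_eq {m : ℕ} (μ : Finset (Fin m) → ℝ) (A : Finset (Fin m)) :
    IB μ A = (1/2:ℝ) ^ (m - A.card) *
      ∑ B : Finset (Fin m), (-1:ℝ) ^ ((A \ B).card) * μ B := by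
  unfold IB
  rw [one_div, ← inv_pow, ← one_div]
  congr 1
  rw [← Finset.sum_product']
  refine Finset.sum_nbij' (i := fun p => p.2 ∪ p.1) (j := fun B => (B \ A, B ∩ A))
    ?_ ?_ ?_ ?_ ?_
  · rintro ⟨D, D'⟩ _; exact Finset.mem_univ _
  · intro B _
    simp only [Finset.mem_product, Finset.mem_powerset]
    exact ⟨fun x hx => Finset.mem_compl.mpr (Finset.mem_sdiff.mp hx).2,
      Finset.inter_subset_right⟩
  · rintro ⟨D, D'⟩ hp
    simp only [Finset.mem_product, Finset.mem_powerset] at hp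
    obtain ⟨hD, hD'⟩ := hp
    have hDA : ∀ x ∈ D, x ∉ A := fun x hx => Finset.mem_compl.mp (hD hx)
    have h1 : (D' ∪ D) \ A = D := by
      ext x
      simp only [Finset.mem_sdiff, Finset.mem_union]
      constructor
      · rintro ⟨h | h, hna⟩
        · exact absurd (hD' h) hna
        · exact h
      · intro h; exact ⟨Or.inr h, hDA x h⟩
    have h2 : (D' ∪ D) ∩ A = D' := by
      ext x
      simp only [Finset.mem_inter, Finset.mem_union]
      constructor
      · rintro ⟨h | h, ha⟩
        · exact h
        · exact absurd ha (hDA x h)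
      · intro h; exact ⟨Or.inl h, hD' h⟩
    simp [h1, h2]
  · intro B _
    simp only
    rw [Finset.union_comm, Finset.sdiff_union_inter]
  · rintro ⟨D, D'⟩ hp
    simp only [Finset.mem_product, Finset.mem_powerset] at hp
    obtain ⟨hD, hD'⟩ := hp
    have hDA : ∀ x ∈ D, x ∉ A := fun x hx => Finset.mem_compl.mp (hD hx)
    have h1 : A \ (D' ∪ D) = A \ D' := by
      ext x
      simp only [Finset.mem_sdiff, Finset.mem_union]
      constructor
      · rintro ⟨ha, h⟩; exact ⟨ha, fun hx => h (Or.inl hx)⟩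
      · rintro ⟨ha, h⟩
        refine ⟨ha, fun hx => ?_⟩
        rcases hx with hx | hx
        · exact h hx
        · exact hDA x hx ha
    rw [h1, Finset.card_sdiff_of_subset hD']

lemma var_prod {m : ℕ} (A : Finset (Fin m)) (hA : A.Nonempty) (c : ℝ) :
    varUnif (fun v => c * ∏ j ∈ A, (v j - 1/2)) = (1 / 12 ^ A.card) * c ^ 2 := by
  set p : Fin m → ℝ → ℝ := fun j x => if j ∈ A then x - 1/2 else 1 with hp
  have hprod : ∀ v : Fin m → ℝ, ∏ j ∈ A, (v j - 1/2) = ∏ j, p j (v j) := by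
    intro v
    rw [show (∏ j : Fin m, p j (v j)) = ∏ j ∈ univ ∩ A, (v j - 1/2) from
      Finset.prod_ite_mem univ A _, Finset.univ_inter]
  have hunifPi : unifPi m = Measure.pi fun _ => unif := rfl
  have hmean : ∫ w, c * ∏ j ∈ A, (w j - 1/2) ∂(unifPi m) = 0 := by
    rw [hunifPi]
    simp only [hprod]
    rw [MeasureTheory.integral_const_mul, aux_integral_prod p]
    have h0 : ∫ x, p (hA.choose) x ∂unif = 0 := by
      simp only [hp, hA.choose_spec, ite_true]
      exact unif_int_sub_half
    rw [Finset.prod_eq_zero (Finset.mem_univ hA.choose) h0]; ring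
  unfold varUnif
  rw [hmean]
  simp only [sub_zero]
  have hsq : ∀ v : Fin m → ℝ,
      (c * ∏ j ∈ A, (v j - 1/2))^2 = c^2 * ∏ j, (p j (v j))^2 := by
    intro v; rw [hprod, mul_pow, ← Finset.prod_pow]
  simp only [hsq]
  rw [hunifPi, MeasureTheory.integral_const_mul,
    aux_integral_prod (fun j x => (p j x)^2)]
  have hv : ∀ j, ∫ x, (p j x)^2 ∂unif = if j ∈ A then (1/12:ℝ) else 1 := by
    intro j
    by_cases h : j ∈ A
    · simp only [hp, h, ite_true]
      exact unif_int_sq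
    · simp [hp, h]
  simp only [hv]
  rw [Finset.prod_ite_mem, Finset.univ_inter, Finset.prod_const]
  rw [div_pow, one_pow]
  ring

/-- The nonnormalized Sobol' index of a nonempty subset `A` for the multilinear model
equals `(1/12^|A|) (I^B(A))²` where `I^B` is the Banzhaf interaction index. -/
theorem sobol_multilinear_banzhaf {m : ℕ} (μ : Finset (Fin m) → ℝ)
    (hμ : IsCapacity μ) (A : Finset (Fin m)) (hA : A.Nonempty) :
    varUnif (hdmr A (FML μ)) =
      (1 / 12 ^ A.card) * (IB μ A) ^ 2 := by
  have h : hdmr A (FML μ) = fun v => IB μ A * ∏ j ∈ A, (v j - 1/2) := by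
    funext v
    rw [hdmr_FML, IB_eq]
  rw [h, var_prod A hA]
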